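/- The sequence K⟨n⟩ →(δ) (K⟨n⟩)^n →(θ) K⟨n⟩ is exact at (K⟨n⟩)^n, where δ(P) = (δ_1 P, …, δ_n P) and θ((P_j)_{1≤j≤n}) = Σ_{j=1}^n [X_j, P_j]: the image of the cyclic gradient map δ equals the kernel of θ. -/

import Mathlib

/-! Setup: the free associative algebra `K⟨X_1,…,X_n⟩` realized as the monoid
algebra of the free monoid on `Fin n`, together with the partial cyclic
derivatives `δ_j`, the number operator `N` and the cyclic symmetrization `C`. -/

noncomputable section

/-- `K⟨n⟩`, the ring of polynomials in `n` noncommuting indeterminates. -/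
abbrev FreePoly (K : Type) [CommSemiring K] (n : ℕ) : Type :=
  MonoidAlgebra K (FreeMonoid (Fin n))

/-- The monomial `X_{i_1} ⋯ X_{i_p}` associated to the word `w = [i_1,…,i_p]`. -/
def mono (K : Type) [Field K] {n : ℕ} (w : List (Fin n)) : FreePoly K n :=
  MonoidAlgebra.single (FreeMonoid.ofList w) 1

/-- The indeterminate `X k`. -/
def Xvar (K : Type) [Field K] {n : ℕ} (k : Fin n) : FreePoly K n := mono K [k]

variable {K : Type} [Field K] [CharZero K] {n : ℕ}

/-- The partial cyclic derivative `δ_j = μ̃ ∘ ∂_j`: on a monomial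
`X_{i_0} ⋯ X_{i_s}` it gives `∑_{p : i_p = j} X_{i_{p+1}} ⋯ X_{i_s} X_{i_0} ⋯ X_{i_{p-1}}`. -/
def cycDeriv (j : Fin n) : FreePoly K n →ₗ[K] FreePoly K n :=
  (Finsupp.lsum K fun w => LinearMap.toSpanSingleton K _
    (∑ p : Fin (FreeMonoid.toList w).length,
      if (FreeMonoid.toList w).get p = j then
        mono K ((FreeMonoid.toList w).drop (p + 1) ++ (FreeMonoid.toList w).take p)
      else 0)) ∘ₗ (MonoidAlgebra.coeffLinearEquiv K).toLinearMap

/-- The number operator `N`, multiplying a monomial by its degree. -/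
def numOp : FreePoly K n →ₗ[K] FreePoly K n :=
  (Finsupp.lsum K fun w => LinearMap.toSpanSingleton K _
    ((FreeMonoid.toList w).length • mono K (FreeMonoid.toList w))) ∘ₗ
      (MonoidAlgebra.coeffLinearEquiv K).toLinearMap

/-- The cyclic symmetrization `C`, sending a monomial of degree `p ≥ 1` to the
sum of its `p` cyclic rotations (and `1` to `0`). -/
def cycSym : FreePoly K n →ₗ[K] FreePoly K n :=
  (Finsupp.lsum K fun w => LinearMap.toSpanSingleton K _
    (∑ p ∈ Finset.range (FreeMonoid.toList w).length,
      mono K ((FreeMonoid.toList w).rotate (p + 1)))) ∘ₗ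
      (MonoidAlgebra.coeffLinearEquiv K).toLinearMap

set_option linter.unusedSectionVars false

namespace CycAux
open FreeMonoid
open scoped Classical

/-! ### Rotation combinatorics -/

lemma rot_inv_aux {α : Type*} (x y : List α) (p : ℕ) (hp : p < x.length) (h : x.rotate p = y) :
    y.rotate ((x.length - p) % x.length) = x := by
  subst h
  rw [List.rotate_rotate, ← List.rotate_mod]
  have h0 : (p + (x.length - p) % x.length) % x.length = 0 := by
    rcases Nat.eq_zero_or_pos p with h0 | h0
    · subst h0; simp
    · have h1 : (x.length - p) % x.length = x.length - p := Nat.mod_eq_of_lt (by omega)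
      rw [h1]
      have : p + (x.length - p) = x.length := by omega
      rw [this, Nat.mod_self]
  rw [h0, List.rotate_zero]

lemma inv_invol {m p : ℕ} (hp : p < m) : (m - (m - p) % m) % m = p := by
  rcases Nat.eq_zero_or_pos p with h0 | h0
  · subst h0; simp
  · have h1 : (m - p) % m = m - p := Nat.mod_eq_of_lt (by omega)
    rw [h1]
    have : m - (m - p) = p := by omega
    rw [this, Nat.mod_eq_of_lt hp]

lemma rot_sum {α : Type*} [DecidableEq α] (x y : List α) :
    ∑ p ∈ Finset.range x.length, (if x.rotate p = y then (1:K) else 0)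
      = ∑ p ∈ Finset.range y.length, (if y.rotate p = x then (1:K) else 0) := by
  by_cases hxy : x.length = y.length
  · rcases Nat.eq_zero_or_pos x.length with hm | hm
    · rw [hm, ← hxy, hm]; simp
    · refine Finset.sum_nbij' (fun p => (x.length - p) % x.length)
        (fun p => (y.length - p) % y.length) ?_ ?_ ?_ ?_ ?_
      · intro p hp
        rw [Finset.mem_range] at *
        rw [← hxy]; exact Nat.mod_lt _ hm
      · intro p hp
        rw [Finset.mem_range] at *
        rw [hxy]; exact Nat.mod_lt _ (hxy ▸ hm)
      · intro p hp
        rw [Finset.mem_range] at hp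
        rw [← hxy]; exact inv_invol hp
      · intro p hp
        rw [Finset.mem_range] at hp
        rw [hxy]; exact inv_invol hp
      · intro p hp
        rw [Finset.mem_range] at hp
        congr 1
        apply propext
        constructor
        · intro h; exact rot_inv_aux x y p hp h
        · intro h
          have h2 := rot_inv_aux y x ((x.length - p) % x.length)
            (by rw [← hxy]; exact Nat.mod_lt _ hm) h
          rw [← hxy, inv_invol hp] at h2
          exact h2
  · have h1 : ∀ p, ¬ (x.rotate p = y) := fun p h => hxy (by rw [← h, List.length_rotate])
    have h2 : ∀ p, ¬ (y.rotate p = x) := fun p h => hxy (by rw [← h, List.length_rotate])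
    simp [h1, h2]

lemma sum_shift {M : Type*} [AddCommGroup M] (m : ℕ) (f : ℕ → M) (hf : f m = f 0) :
    ∑ p ∈ Finset.range m, f (p + 1) = ∑ p ∈ Finset.range m, f p := by
  have h1 := Finset.sum_range_succ f m
  have h2 := Finset.sum_range_succ' f m
  rw [h1, hf] at h2
  exact add_right_cancel h2.symm

/-! ### Coefficient computations -/

lemma mono_apply (w v : List (Fin n)) :
    (mono K w).coeff (ofList v) = if w = v then (1:K) else 0 := by
  rw [mono, MonoidAlgebra.single_apply]; congr 1

lemma cycDeriv_single (k : Fin n) (w : FreeMonoid (Fin n)) (c : K) :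
    cycDeriv k (MonoidAlgebra.single w c : FreePoly K n) =
      c • ∑ p : Fin (toList w).length,
        if (toList w).get p = k then
          mono K ((toList w).drop (p + 1) ++ (toList w).take p)
        else 0 := by
  rw [cycDeriv, LinearMap.comp_apply, LinearEquiv.coe_coe, MonoidAlgebra.coeffLinearEquiv_apply,
    MonoidAlgebra.coeff_single]; erw [Finsupp.lsum_single]; rw [LinearMap.toSpanSingleton_apply]

lemma rotate_eq_cons_iff {α : Type*} (l : List α) (p : ℕ) (hp : p < l.length) (k : α)
    (v : List α) :
    l.rotate p = k :: v ↔ (l.get ⟨p, hp⟩ = k ∧ l.drop (p + 1) ++ l.take p = v) := by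
  rw [List.rotate_eq_drop_append_take hp.le, List.drop_eq_getElem_cons hp, List.cons_append,
    List.cons.injEq, List.get_eq_getElem]

lemma cycDeriv_apply (k : Fin n) (Q : FreePoly K n) (v : List (Fin n)) :
    (cycDeriv k Q).coeff (ofList v) =
      ∑ p ∈ Finset.range (v.length + 1), Q.coeff (ofList ((k :: v).rotate p)) := by
  induction Q using MonoidAlgebra.induction_linear with
  | zero => simp
  | add f g hf hg =>
    rw [map_add, MonoidAlgebra.coeff_add, Finsupp.add_apply, hf, hg, ← Finset.sum_add_distrib]
    rfl
  | single w c =>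
    rw [cycDeriv_single, MonoidAlgebra.coeff_smul, Finsupp.smul_apply]
    rw [MonoidAlgebra.coeff_sum, Finsupp.finset_sum_apply]
    have hterm : ∀ p : Fin (toList w).length,
        ((if (toList w).get p = k then
          mono K ((toList w).drop (p + 1) ++ (toList w).take p) else 0) : FreePoly K n).coeff
          (ofList v)
        = if (toList w).rotate ↑p = k :: v then (1:K) else 0 := by
      intro p
      rw [apply_ite (fun f : FreePoly K n => f.coeff (ofList v)), mono_apply,
        MonoidAlgebra.coeff_zero, Finsupp.zero_apply]
      by_cases hr : (toList w).rotate ↑p = k :: v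
      · obtain ⟨h1, h2⟩ := (rotate_eq_cons_iff _ ↑p p.isLt k v).mp hr
        rw [if_pos hr, if_pos h1, if_pos h2]
      · rw [if_neg hr]
        by_cases h1 : (toList w).get p = k
        · rw [if_pos h1, if_neg]
          intro h2
          exact hr ((rotate_eq_cons_iff _ ↑p p.isLt k v).mpr ⟨h1, h2⟩)
        · rw [if_neg h1]
    simp only [hterm]
    rw [Fin.sum_univ_eq_sum_range (fun p => if (toList w).rotate p = k :: v then (1:K) else 0)]
    rw [rot_sum]
    have : ∀ p, (MonoidAlgebra.single w c : FreePoly K n).coeff (ofList ((k :: v).rotate p))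
        = c * (if (k :: v).rotate p = toList w then (1:K) else 0) := by
      intro p
      rw [MonoidAlgebra.single_apply]
      by_cases h : (k :: v).rotate p = toList w
      · rw [if_pos h, if_pos (by rw [h]; exact (ofList_toList w).symm), mul_one]
      · rw [if_neg h, if_neg (fun hw => h (by rw [hw]; rfl)), mul_zero]
    simp only [this]
    rw [smul_eq_mul, Finset.mul_sum]
    rfl

/-! ### Multiplication by a variable, coefficientwise -/

lemma Xvar_mul_single (j : Fin n) (w : FreeMonoid (Fin n)) (c : K) :
    Xvar K j * (MonoidAlgebra.single w c : FreePoly K n)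
      = MonoidAlgebra.single (ofList (j :: toList w)) c := by
  rw [Xvar, mono, MonoidAlgebra.single_mul_single, one_mul]
  rfl

lemma single_mul_Xvar (j : Fin n) (w : FreeMonoid (Fin n)) (c : K) :
    (MonoidAlgebra.single w c : FreePoly K n) * Xvar K j
      = MonoidAlgebra.single (ofList (toList w ++ [j])) c := by
  rw [Xvar, mono, MonoidAlgebra.single_mul_single, mul_one]
  rfl

lemma Xvar_mul_apply_nil (j : Fin n) (Q : FreePoly K n) :
    (Xvar K j * Q).coeff (ofList ([] : List (Fin n))) = 0 := by
  induction Q using MonoidAlgebra.induction_linear with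
  | zero => simp
  | add f g hf hg => rw [mul_add, MonoidAlgebra.coeff_add, Finsupp.add_apply, hf, hg, add_zero]
  | single w c =>
    rw [Xvar_mul_single, MonoidAlgebra.single_apply, if_neg]
    intro h
    exact List.cons_ne_nil _ _ (congrArg toList h)

lemma Xvar_mul_apply_cons (j a : Fin n) (v : List (Fin n)) (Q : FreePoly K n) :
    (Xvar K j * Q).coeff (ofList (a :: v)) = if j = a then Q.coeff (ofList v) else 0 := by
  induction Q using MonoidAlgebra.induction_linear with
  | zero => simp
  | add f g hf hg =>
    rw [mul_add, MonoidAlgebra.coeff_add, Finsupp.add_apply, hf, hg]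
    by_cases h : j = a <;> simp [h]
  | single w c =>
    rw [Xvar_mul_single, MonoidAlgebra.single_apply, MonoidAlgebra.single_apply]
    have : (ofList (j :: toList w) = ofList (a :: v)) ↔ (j = a ∧ w = ofList v) := by
      constructor
      · intro h
        have h' : j :: toList w = a :: v := congrArg toList h
        obtain ⟨h1, h2⟩ := List.cons.injEq .. ▸ h'
        exact ⟨h1, by rw [← h2]; rfl⟩
      · rintro ⟨h1, h2⟩; rw [h1, h2]; rfl
    by_cases h1 : j = a
    · by_cases h2 : w = ofList v
      · rw [if_pos (this.mpr ⟨h1, h2⟩), if_pos h1, if_pos h2]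
      · rw [if_neg (fun h => h2 (this.mp h).2), if_pos h1, if_neg h2]
    · rw [if_neg (fun h => h1 (this.mp h).1), if_neg h1]

lemma mul_Xvar_apply_nil (j : Fin n) (Q : FreePoly K n) :
    (Q * Xvar K j).coeff (ofList ([] : List (Fin n))) = 0 := by
  induction Q using MonoidAlgebra.induction_linear with
  | zero => simp
  | add f g hf hg => rw [add_mul, MonoidAlgebra.coeff_add, Finsupp.add_apply, hf, hg, add_zero]
  | single w c =>
    rw [single_mul_Xvar, MonoidAlgebra.single_apply, if_neg]
    intro h
    have h' : toList w ++ [j] = [] := congrArg toList h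
    simpa using congrArg List.length h'

lemma mul_Xvar_apply_concat (j b : Fin n) (v : List (Fin n)) (Q : FreePoly K n) :
    (Q * Xvar K j).coeff (ofList (v ++ [b])) = if j = b then Q.coeff (ofList v) else 0 := by
  induction Q using MonoidAlgebra.induction_linear with
  | zero => simp
  | add f g hf hg =>
    rw [add_mul, MonoidAlgebra.coeff_add, Finsupp.add_apply, hf, hg]
    by_cases h : j = b <;> simp [h]
  | single w c =>
    rw [single_mul_Xvar, MonoidAlgebra.single_apply, MonoidAlgebra.single_apply]
    have : (ofList (toList w ++ [j]) = ofList (v ++ [b])) ↔ (j = b ∧ w = ofList v) := by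
      constructor
      · intro h
        have h' : toList w ++ [j] = v ++ [b] := congrArg toList h
        obtain ⟨h1, h2⟩ := List.append_inj' h' rfl
        exact ⟨List.cons.injEq .. ▸ h2 |>.1, by rw [← h1]; rfl⟩
      · rintro ⟨h1, h2⟩; rw [h1, h2]; rfl
    by_cases h1 : j = b
    · by_cases h2 : w = ofList v
      · rw [if_pos (this.mpr ⟨h1, h2⟩), if_pos h1, if_pos h2]
      · rw [if_neg (fun h => h2 (this.mp h).2), if_pos h1, if_neg h2]
    · rw [if_neg (fun h => h1 (this.mp h).1), if_neg h1]

/-! ### The inverse number operator -/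

/-- Inverse of the number operator (up to the constant term). -/
def invN : FreePoly K n →ₗ[K] FreePoly K n :=
  (Finsupp.lsum K fun w => LinearMap.toSpanSingleton K _
    ((((FreeMonoid.toList w).length : K))⁻¹ • mono K (FreeMonoid.toList w))) ∘ₗ
      (MonoidAlgebra.coeffLinearEquiv K).toLinearMap

lemma invN_apply (Q : FreePoly K n) (v : List (Fin n)) :
    (invN Q).coeff (ofList v) = ((v.length : K))⁻¹ * Q.coeff (ofList v) := by
  induction Q using MonoidAlgebra.induction_linear with
  | zero => simp
  | add f g hf hg =>
    rw [map_add, MonoidAlgebra.coeff_add, Finsupp.add_apply, hf, hg, MonoidAlgebra.coeff_add,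
      Finsupp.add_apply, mul_add]
  | single w c =>
    rw [invN, LinearMap.comp_apply, LinearEquiv.coe_coe, MonoidAlgebra.coeffLinearEquiv_apply,
      MonoidAlgebra.coeff_single]; erw [Finsupp.lsum_single]; rw [LinearMap.toSpanSingleton_apply]
    rw [MonoidAlgebra.coeff_smul, Finsupp.smul_apply, MonoidAlgebra.coeff_smul, Finsupp.smul_apply, mono_apply,
      Finsupp.single_apply]
    by_cases h : toList w = v
    · rw [if_pos h, if_pos (by rw [← h]; exact (ofList_toList w).symm), h]
      rw [smul_eq_mul, smul_eq_mul, mul_one]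
      ring
    · rw [if_neg h, if_neg (fun hw => h (by rw [hw]; rfl))]
      simp

/-! ### The two inclusions -/

lemma FP_sub_apply (f g : FreePoly K n) (x : FreeMonoid (Fin n)) :
    (f - g).coeff x = f.coeff x - g.coeff x := Finsupp.sub_apply _ _ _

lemma theta_cycDeriv (P : FreePoly K n) :
    ∑ j : Fin n, (Xvar K j * cycDeriv j P - cycDeriv j P * Xvar K j) = 0 := by
  apply MonoidAlgebra.ext
  apply Finsupp.ext
  intro x
  show (∑ j : Fin n, (Xvar K j * cycDeriv j P - cycDeriv j P * Xvar K j)).coeff (ofList (toList x))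
    = (0 : FreePoly K n).coeff (ofList (toList x))
  generalize toList x = u
  rw [MonoidAlgebra.coeff_sum, Finset.sum_apply', MonoidAlgebra.coeff_zero, Finsupp.zero_apply]
  simp only [FP_sub_apply]
  rcases u with _ | ⟨a, v⟩
  · refine Finset.sum_eq_zero fun j _ => ?_
    rw [Xvar_mul_apply_nil, mul_Xvar_apply_nil, sub_zero]
  · rcases List.eq_nil_or_concat (a :: v) with h | ⟨L, b, h⟩
    · exact absurd h (by simp)
    · rw [List.concat_eq_append] at h
      have hlen : v.length = L.length := by
        have := congrArg List.length h
        simp at this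
        omega
      have e1 : ∑ j : Fin n, (Xvar K j * cycDeriv j P).coeff (ofList (a :: v))
          = (cycDeriv a P).coeff (ofList v) := by
        simp only [Xvar_mul_apply_cons]
        rw [Finset.sum_ite_eq' Finset.univ a (fun j => (cycDeriv j P).coeff (ofList v))]
        simp
      have e2 : ∑ j : Fin n, (cycDeriv j P * Xvar K j).coeff (ofList (a :: v))
          = (cycDeriv b P).coeff (ofList L) := by
        rw [h]
        simp only [mul_Xvar_apply_concat]
        rw [Finset.sum_ite_eq' Finset.univ b (fun j => (cycDeriv j P).coeff (ofList L))]
        simp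
      rw [Finset.sum_sub_distrib, e1, e2]
      rw [cycDeriv_apply, cycDeriv_apply, hlen]
      have hrot : ∀ p : ℕ, (a :: v).rotate p = (b :: L).rotate (p + 1) := by
        intro p
        have h1 : (b :: L).rotate 1 = L ++ [b] := by
          rw [List.rotate_cons_succ, List.rotate_zero]
        have h2 : (b :: L).rotate (p + 1) = ((b :: L).rotate 1).rotate p := by
          rw [List.rotate_rotate, add_comm]
        rw [h2, h1, ← h]
      have hshift := sum_shift (M := K) (L.length + 1)
        (fun p => P.coeff (ofList ((b :: L).rotate p))) (by
          show P.coeff (ofList ((b :: L).rotate (L.length + 1)))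
            = P.coeff (ofList ((b :: L).rotate 0))
          have hl : (b :: L).rotate (L.length + 1) = (b :: L).rotate 0 := by
            rw [List.rotate_zero]
            have hc : L.length + 1 = (b :: L).length := by simp
            rw [hc, List.rotate_length]
          rw [hl])
      rw [sub_eq_zero]
      calc ∑ p ∈ Finset.range (L.length + 1), P.coeff (ofList ((a :: v).rotate p))
          = ∑ p ∈ Finset.range (L.length + 1), P.coeff (ofList ((b :: L).rotate (p + 1))) := by
            exact Finset.sum_congr rfl fun p _ => by rw [hrot]
        _ = ∑ p ∈ Finset.range (L.length + 1), P.coeff (ofList ((b :: L).rotate p)) := hshift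

end CycAux

open CycAux FreeMonoid in
theorem range_cycGradient_eq_ker_theta :
    {Ps : Fin n → FreePoly K n | ∃ P : FreePoly K n, ∀ j : Fin n, cycDeriv j P = Ps j} =
      {Ps : Fin n → FreePoly K n |
        ∑ j : Fin n, (Xvar K j * Ps j - Ps j * Xvar K j) = 0} := by
  ext Ps
  simp only [Set.mem_setOf_eq]
  constructor
  · rintro ⟨P, hP⟩
    simp only [← hP]
    exact theta_cycDeriv P
  · intro hPs
    classical
    set d : List (Fin n) → K := fun u => match u with
      | [] => 0
      | a :: v => (Ps a).coeff (ofList v) with hd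
    have hcoeff : ∀ u : List (Fin n),
        (∑ j : Fin n, (Xvar K j * Ps j).coeff (ofList u))
          = ∑ j : Fin n, (Ps j * Xvar K j).coeff (ofList u) := by
      intro u
      have h0 : (∑ j : Fin n, (Xvar K j * Ps j - Ps j * Xvar K j)).coeff (ofList u) = 0 := by
        rw [hPs]; rfl
      rw [MonoidAlgebra.coeff_sum, Finset.sum_apply'] at h0
      simp only [FP_sub_apply] at h0
      rw [Finset.sum_sub_distrib, sub_eq_zero] at h0
      exact h0
    have hS : ∀ u : List (Fin n), (∑ j : Fin n, (Xvar K j * Ps j).coeff (ofList u)) = d u := by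
      intro u
      rcases u with _ | ⟨a, v⟩
      · rw [Finset.sum_eq_zero fun j _ => Xvar_mul_apply_nil j (Ps j)]
      · simp only [Xvar_mul_apply_cons]
        rw [Finset.sum_ite_eq' Finset.univ a (fun j => (Ps j).coeff (ofList v))]
        simp [hd]
    have hS' : ∀ (L : List (Fin n)) (b : Fin n),
        (∑ j : Fin n, (Ps j * Xvar K j).coeff (ofList (L ++ [b]))) = (Ps b).coeff (ofList L) := by
      intro L b
      simp only [mul_Xvar_apply_concat]
      rw [Finset.sum_ite_eq' Finset.univ b (fun j => (Ps j).coeff (ofList L))]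
      simp
    have hstep : ∀ (L : List (Fin n)) (b : Fin n), d (L ++ [b]) = d (b :: L) := by
      intro L b
      have h1 := hcoeff (L ++ [b])
      rw [hS (L ++ [b]), hS' L b] at h1
      exact h1
    have hrot1 : ∀ u : List (Fin n), d (u.rotate 1) = d u := by
      intro u
      rcases u with _ | ⟨a, v⟩
      · simp
      · rw [List.rotate_cons_succ, List.rotate_zero]
        exact hstep v a
    have hrotk : ∀ (p : ℕ) (u : List (Fin n)), d (u.rotate p) = d u := by
      intro p
      induction p with
      | zero => intro u; rw [List.rotate_zero]
      | succ p ih =>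
        intro u
        have : u.rotate (p + 1) = (u.rotate p).rotate 1 := by
          rw [List.rotate_rotate]
        rw [this, hrot1, ih]
    refine ⟨invN (∑ j : Fin n, Xvar K j * Ps j), fun k => ?_⟩
    apply MonoidAlgebra.ext
    apply Finsupp.ext
    intro x
    show (cycDeriv k (invN (∑ j : Fin n, Xvar K j * Ps j))).coeff (ofList (toList x))
      = (Ps k).coeff (ofList (toList x))
    generalize toList x = v
    rw [cycDeriv_apply]
    have hterm : ∀ p ∈ Finset.range (v.length + 1),
        (invN (∑ j : Fin n, Xvar K j * Ps j)).coeff (ofList ((k :: v).rotate p))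
          = ((v.length + 1 : K))⁻¹ * (Ps k).coeff (ofList v) := by
      intro p _
      obtain ⟨z, hz⟩ : ∃ z : List (Fin n), z = (k :: v).rotate p := ⟨_, rfl⟩
      rw [← hz, invN_apply, MonoidAlgebra.coeff_sum, Finset.sum_apply', hS]
      have hlen : z.length = v.length + 1 := by
        rw [hz, List.length_rotate, List.length_cons]
      have hdz : d z = (Ps k).coeff (ofList v) := by
        rw [hz, hrotk p (k :: v)]
      rw [hdz, hlen]
      push_cast
      ring
    rw [Finset.sum_congr rfl hterm, Finset.sum_const, Finset.card_range]
    rw [nsmul_eq_mul]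
    have hne : ((v.length + 1 : K)) ≠ 0 := by
      have : ((v.length + 1 : ℕ) : K) ≠ 0 := Nat.cast_ne_zero.mpr (Nat.succ_ne_zero _)
      push_cast at this
      exact this
    push_cast
    rw [← mul_assoc, mul_inv_cancel₀ hne, one_mul]
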